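/- Let (M,f) be a symmetric bilinear lattice with dual lattice M^♯ ⊆ V = M ⊗ ℚ. Then M^♯♯ = M + Ker(f̂_ℚ), where M^♯♯ = {x ∈ V : f_ℚ(x, M^♯) ⊆ ℤ}. -/

import Mathlib

/-- The dual lattice `M^♯ = {x ∈ V : F(x, M) ⊆ ℤ}`. -/
def dualLattice {V : Type*} [AddCommGroup V] [Module ℚ V]
    (F : V →ₗ[ℚ] V →ₗ[ℚ] ℚ) (M : Submodule ℤ V) : Submodule ℤ V where
  carrier := {x | ∀ m ∈ M, ∃ n : ℤ, (n : ℚ) = F x m}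
  add_mem' := by
    intro x y hx hy m hm
    obtain ⟨a, ha⟩ := hx m hm
    obtain ⟨b, hb⟩ := hy m hm
    exact ⟨a + b, by push_cast; simp [ha, hb]⟩
  zero_mem' := by
    intro m hm
    exact ⟨0, by simp⟩
  smul_mem' := by
    intro k x hx m hm
    obtain ⟨a, ha⟩ := hx m hm
    refine ⟨k * a, ?_⟩
    push_cast
    rw [ha]
    simp

/-- `M^♯♯ = M + Ker f̂_ℚ`. -/
theorem mem_dualLattice {V : Type*} [AddCommGroup V] [Module ℚ V]
    (F : V →ₗ[ℚ] V →ₗ[ℚ] ℚ) (M : Submodule ℤ V) (x : V) :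
    x ∈ dualLattice F M ↔ ∀ m ∈ M, ∃ n : ℤ, (n : ℚ) = F x m := Iff.rfl

theorem stmt8 {V : Type*} [AddCommGroup V] [Module ℚ V] [FiniteDimensional ℚ V]
    (F : V →ₗ[ℚ] V →ₗ[ℚ] ℚ) (hsymm : ∀ x y : V, F x y = F y x)
    (M : Submodule ℤ V) (hspan : Submodule.span ℚ (M : Set V) = ⊤) (hfg : M.FG)
    (hint : ∀ x ∈ M, ∀ y ∈ M, ∃ n : ℤ, (n : ℚ) = F x y) :
    dualLattice F (dualLattice F M) = M ⊔ (LinearMap.ker F).restrictScalars ℤ := by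
  classical
  set K : Submodule ℚ V := LinearMap.ker F with hK
  obtain ⟨W, hW⟩ := Submodule.exists_isCompl K
  let p : V →ₗ[ℚ] W := Submodule.linearProjOfIsCompl W K hW.symm
  have hpW : ∀ w : W, p (w : V) = w := fun w =>
    Submodule.linearProjOfIsCompl_apply_left hW.symm w
  have hkerp : LinearMap.ker p = K := Submodule.linearProjOfIsCompl_ker hW.symm
  have hFK : ∀ k ∈ K, ∀ y : V, F y k = 0 := by
    intro k hk y
    rw [hsymm]
    exact congrFun (congrArg _ (LinearMap.mem_ker.mp hk)) y
  have hFp : ∀ x y : V, F x y = F (p x : V) (p y : V) := by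
    intro x y
    have hx : x - (p x : V) ∈ K := by
      rw [← hkerp, LinearMap.mem_ker, map_sub, hpW, sub_self]
    have hy : y - (p y : V) ∈ K := by
      rw [← hkerp, LinearMap.mem_ker, map_sub, hpW, sub_self]
    have h1 : F x y = F (p x : V) y := by
      rw [hsymm x y, hsymm (p x : V) y, ← sub_eq_zero, ← map_sub]
      exact hFK _ hx y
    have h2 : F (p x : V) y = F (p x : V) (p y : V) := by
      rw [← sub_eq_zero, ← map_sub]
      exact hFK _ hy (p x : V)
    rw [h1, h2]
  let B : LinearMap.BilinForm ℚ W := F.compl₁₂ W.subtype W.subtype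
  have hB : ∀ x y : W, B x y = F (x : V) (y : V) := fun x y => rfl
  have hBsymm : B.IsSymm := by
    refine ⟨fun x y => ?_⟩
    simpa [hB] using hsymm (x : V) (y : V)
  have hBnd : B.Nondegenerate := by
    refine (LinearMap.IsRefl.nondegenerate_iff_separatingLeft (fun x y h => by rwa [hBsymm.eq])).mpr ?_
    intro w hw
    have hwK : (w : V) ∈ K := by
      rw [hK, LinearMap.mem_ker]
      ext y
      have : F (w : V) y = F (w : V) ((p y : W) : V) := by
        rw [hFp, hpW]
      rw [LinearMap.zero_apply, this]
      exact hw (p y)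
    exact Subtype.ext ((Submodule.disjoint_def.mp hW.disjoint) _ hwK w.2)
  let M' : Submodule ℤ W := M.map (p.restrictScalars ℤ)
  have hM'fg : M'.FG := hfg.map _
  have : Module.Finite ℤ M' := Module.Finite.iff_fg.mpr hM'fg
  have : IsAddTorsionFree W := IsAddTorsionFree.of_module_rat W
  have : Module.Free ℤ M' := Module.free_of_finite_type_torsion_free'
  let ι := Module.Free.ChooseBasisIndex ℤ M'
  let c : Module.Basis ι ℤ M' := Module.Free.chooseBasis ℤ M'
  let v : ι → W := fun i => (c i : W)
  have hspanv : Submodule.span ℤ (Set.range v) = M' := by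
    have h2 := congrArg (Submodule.map M'.subtype) c.span_eq
    rw [Submodule.map_span, Submodule.map_top, Submodule.range_subtype] at h2
    rw [← h2]
    congr 1
    ext w
    simp [v, Set.range_comp]
  have hli : LinearIndependent ℚ v := by
    rw [← LinearIndependent.iff_fractionRing ℤ ℚ]
    exact c.linearIndependent.map' M'.subtype (Submodule.ker_subtype _)
  have hspanq : ⊤ ≤ Submodule.span ℚ (Set.range v) := by
    intro w _
    have hwV : (w : V) ∈ Submodule.span ℚ (M : Set V) := by rw [hspan]; trivial
    have hmem : w ∈ Submodule.span ℚ (M' : Set W) := by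
      rw [show w = p (w : V) from (hpW w).symm]
      refine Submodule.span_induction
        (p := fun x _ => p x ∈ Submodule.span ℚ (M' : Set W)) ?_ ?_ ?_ ?_ hwV
      · intro x hx
        exact Submodule.subset_span ⟨x, hx, rfl⟩
      · simp
      · intro x y _ _ hx hy; rw [map_add]; exact Submodule.add_mem _ hx hy
      · intro a x _ hx; rw [map_smul]; exact Submodule.smul_mem _ a hx
    refine Submodule.span_le.mpr ?_ hmem
    intro z hz
    rw [← hspanv] at hz
    exact Submodule.span_le_restrictScalars ℤ ℚ _ hz
  let b : Module.Basis ι ℚ W := Module.Basis.mk hli hspanq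
  have key := B.dualSubmodule_dualSubmodule_of_basis (R := ℤ) hBnd hBsymm b
  rw [show Set.range ⇑b = Set.range v by rw [Module.Basis.coe_mk], hspanv] at key
  -- Claim A
  have hone : ∀ q : ℚ, q ∈ (1 : Submodule ℤ ℚ) ↔ ∃ n : ℤ, (n : ℚ) = q := by
    intro q
    rw [Submodule.mem_one]
    simp [eq_intCast]
  have claimA : ∀ x : V, x ∈ dualLattice F M ↔ p x ∈ B.dualSubmodule M' := by
    intro x
    rw [mem_dualLattice, LinearMap.BilinForm.mem_dualSubmodule]
    constructor
    · rintro h _ ⟨m, hm, rfl⟩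
      rw [hone, hB]
      obtain ⟨n, hn⟩ := h m hm
      exact ⟨n, by rw [hn, hFp]; rfl⟩
    · intro h m hm
      have := h (p m) ⟨m, hm, rfl⟩
      rw [hone, hB] at this
      obtain ⟨n, hn⟩ := this
      exact ⟨n, by rw [hn, hFp x m]⟩
  -- Claim B: image of the dual lattice
  have claimB : (dualLattice F M).map (p.restrictScalars ℤ) = B.dualSubmodule M' := by
    apply le_antisymm
    · rintro _ ⟨x, hx, rfl⟩
      exact (claimA x).mp hx
    · intro w hw
      refine Submodule.mem_map.mpr ⟨(w : V), ?_, hpW w⟩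
      rw [claimA, hpW]
      exact hw
  ext x
  rw [mem_dualLattice]
  constructor
  · intro hx
    have hx' : p x ∈ M' := by
      rw [← key, LinearMap.BilinForm.mem_dualSubmodule]
      rintro _ hz
      rw [← claimB] at hz
      obtain ⟨y, hy, rfl⟩ := hz
      rw [hone, hB]
      obtain ⟨n, hn⟩ := hx y hy
      exact ⟨n, by rw [hn, hFp x y]; rfl⟩
    obtain ⟨m, hm, hpm⟩ := hx'
    have hxm : x - m ∈ K := by
      rw [← hkerp, LinearMap.mem_ker, map_sub]
      rw [show p m = p x from hpm, sub_self]
    exact Submodule.mem_sup.mpr ⟨m, hm, x - m, hxm, by abel⟩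
  · intro hx y hy
    obtain ⟨m, hm, k, hk, rfl⟩ := Submodule.mem_sup.mp hx
    rw [mem_dualLattice] at hy
    obtain ⟨n, hn⟩ := hy m hm
    refine ⟨n, ?_⟩
    have hk' : F y k = 0 := hFK k hk y
    rw [map_add, LinearMap.add_apply, hsymm k y, hk', add_zero, hsymm m y, ← hn]
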